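/- For the trajectory z(t) = (z_T sinh(ω(t−t₀)) + z₀ sinh(ω(T−t)))/sinh(ω(T−t₀)) with velocity a = z', the quantity ∫_{t₀}^{T} ((K/2)‖a(t)‖² + (Kω²/2)‖z(t)‖²) dt equals (Kω/(2 sinh(ω(T−t₀)))) · ((‖z₀‖² + ‖z_T‖²) cosh(ω(T−t₀)) − 2 (z₀ ⋅ z_T)). -/

import Mathlib

open Real intervalIntegral

theorem stmt_3 (K ω t₀ T : ℝ) (hK : 0 < K) (hω : 0 < ω) (ht : t₀ < T)
    (hs : Real.sinh (ω * (T - t₀)) ≠ 0)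
    (z₀ zT : EuclideanSpace ℝ (Fin 2))
    (z a : ℝ → EuclideanSpace ℝ (Fin 2))
    (hz : z = fun t => (Real.sinh (ω * (T - t₀)))⁻¹ •
      (Real.sinh (ω * (t - t₀)) • zT + Real.sinh (ω * (T - t)) • z₀))
    (ha : a = deriv z) :
    ∫ t in t₀..T, ((K / 2) * ‖a t‖ ^ 2 + (K * ω ^ 2 / 2) * ‖z t‖ ^ 2) =
      (K * ω / (2 * Real.sinh (ω * (T - t₀)))) *
        ((‖z₀‖ ^ 2 + ‖zT‖ ^ 2) * Real.cosh (ω * (T - t₀)) - 2 * (inner ℝ z₀ zT : ℝ)) := by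
  set s : ℝ := Real.sinh (ω * (T - t₀)) with hsdef
  set A : ℝ := ‖z₀‖ ^ 2
  set B : ℝ := ‖zT‖ ^ 2
  set C : ℝ := (inner ℝ z₀ zT : ℝ)
  -- the derivative of z
  have hd1 : ∀ t : ℝ, HasDerivAt (fun t => Real.sinh (ω * (t - t₀)))
      (ω * Real.cosh (ω * (t - t₀))) t := by
    intro t
    have h : HasDerivAt (fun t : ℝ => ω * (t - t₀)) ω t := by
      simpa using (((hasDerivAt_id t).sub_const t₀).const_mul ω)
    refine ((Real.hasDerivAt_sinh (ω * (t - t₀))).comp t h).congr_deriv ?_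
    ring
  have hd2 : ∀ t : ℝ, HasDerivAt (fun t => Real.sinh (ω * (T - t)))
      (-(ω * Real.cosh (ω * (T - t)))) t := by
    intro t
    have h : HasDerivAt (fun t : ℝ => ω * (T - t)) (-ω) t := by
      simpa using (((hasDerivAt_id t).const_sub T).const_mul ω)
    refine ((Real.hasDerivAt_sinh (ω * (T - t))).comp t h).congr_deriv ?_
    ring
  have hzd : ∀ t : ℝ, HasDerivAt z
      (s⁻¹ • ((ω * Real.cosh (ω * (t - t₀))) • zT +
        (-(ω * Real.cosh (ω * (T - t)))) • z₀)) t := by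
    intro t
    rw [hz]
    exact (((hd1 t).smul_const zT).add ((hd2 t).smul_const z₀)).const_smul s⁻¹
  have haf : ∀ t : ℝ, a t = s⁻¹ • ((ω * Real.cosh (ω * (t - t₀))) • zT +
      (-(ω * Real.cosh (ω * (T - t)))) • z₀) := by
    intro t; rw [ha]; exact (hzd t).deriv
  -- scalar form of the integrand
  set E : ℝ → ℝ := fun t => (K * ω ^ 2 / (2 * s ^ 2)) *
    (B * Real.cosh (2 * (ω * (t - t₀))) + A * Real.cosh (2 * (ω * (T - t)))
      - 2 * C * Real.cosh (ω * (t - t₀) - ω * (T - t))) with hE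
  have hpt : ∀ t : ℝ, (K / 2) * ‖a t‖ ^ 2 + (K * ω ^ 2 / 2) * ‖z t‖ ^ 2 = E t := by
    intro t
    set p := ω * (t - t₀)
    set q := ω * (T - t)
    have hza : ‖a t‖ ^ 2 = s⁻¹ ^ 2 * ((ω * Real.cosh p) ^ 2 * B
        + (ω * Real.cosh q) ^ 2 * A - 2 * (ω * Real.cosh p) * (ω * Real.cosh q) * C) := by
      rw [haf t, norm_smul]
      simp only [Real.norm_eq_abs, mul_pow, sq_abs]
      congr 1
      rw [@norm_add_sq_real]
      rw [norm_smul, norm_smul, real_inner_smul_left, real_inner_smul_right,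
        real_inner_comm]
      simp only [Real.norm_eq_abs, mul_pow, sq_abs]
      ring
    have hzz : ‖z t‖ ^ 2 = s⁻¹ ^ 2 * ((Real.sinh p) ^ 2 * B
        + (Real.sinh q) ^ 2 * A + 2 * Real.sinh p * Real.sinh q * C) := by
      rw [hz]
      simp only [norm_smul, Real.norm_eq_abs, mul_pow, sq_abs]
      congr 1
      rw [@norm_add_sq_real]
      rw [norm_smul, norm_smul, real_inner_smul_left, real_inner_smul_right,
        real_inner_comm]
      simp only [Real.norm_eq_abs, mul_pow, sq_abs]
      ring
    rw [hza, hzz, hE]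
    simp only
    rw [Real.cosh_two_mul, Real.cosh_two_mul, Real.cosh_sub,
      Real.sinh_sq p, Real.sinh_sq q]
    have hs2 : s ^ 2 ≠ 0 := pow_ne_zero 2 hs
    field_simp
    ring
  -- antiderivative
  set F : ℝ → ℝ := fun t => (K * ω / (4 * s ^ 2)) *
    (B * Real.sinh (2 * (ω * (t - t₀))) - A * Real.sinh (2 * (ω * (T - t)))
      - 2 * C * Real.sinh (ω * (t - t₀) - ω * (T - t))) with hF
  have hFd : ∀ t : ℝ, HasDerivAt F (E t) t := by
    intro t
    have h1 : HasDerivAt (fun t : ℝ => Real.sinh (2 * (ω * (t - t₀))))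
        (Real.cosh (2 * (ω * (t - t₀))) * (2 * ω)) t := by
      have h : HasDerivAt (fun t : ℝ => 2 * (ω * (t - t₀))) (2 * ω) t := by
        simpa using ((((hasDerivAt_id t).sub_const t₀).const_mul ω).const_mul 2)
      exact (Real.hasDerivAt_sinh _).comp t h
    have h2 : HasDerivAt (fun t : ℝ => Real.sinh (2 * (ω * (T - t))))
        (Real.cosh (2 * (ω * (T - t))) * (-(2 * ω))) t := by
      have h : HasDerivAt (fun t : ℝ => 2 * (ω * (T - t))) (-(2 * ω)) t := by
        have := (((hasDerivAt_id t).const_sub T).const_mul ω).const_mul 2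
        simpa [mul_comm, mul_assoc] using this
      exact (Real.hasDerivAt_sinh _).comp t h
    have h3 : HasDerivAt (fun t : ℝ => Real.sinh (ω * (t - t₀) - ω * (T - t)))
        (Real.cosh (ω * (t - t₀) - ω * (T - t)) * (2 * ω)) t := by
      have h : HasDerivAt (fun t : ℝ => ω * (t - t₀) - ω * (T - t)) (2 * ω) t := by
        have := (((hasDerivAt_id t).sub_const t₀).const_mul ω).sub
          (((hasDerivAt_id t).const_sub T).const_mul ω)
        exact this.congr_deriv (by ring)
      exact (Real.hasDerivAt_sinh _).comp t h
    have := ((((h1.const_mul B).sub (h2.const_mul A)).sub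
      (h3.const_mul (2 * C))).const_mul (K * ω / (4 * s ^ 2)))
    refine this.congr_deriv ?_
    rw [hE]
    have hs2 : s ^ 2 ≠ 0 := pow_ne_zero 2 hs
    field_simp
    ring
  have hEcont : Continuous E := by
    rw [hE]; fun_prop
  have hint : ∫ t in t₀..T, E t = F T - F t₀ :=
    intervalIntegral.integral_eq_sub_of_hasDerivAt (fun t _ => hFd t)
      (hEcont.intervalIntegrable t₀ T)
  have : (fun t => (K / 2) * ‖a t‖ ^ 2 + (K * ω ^ 2 / 2) * ‖z t‖ ^ 2) = E :=
    funext hpt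
  rw [this, hint, hF]
  simp only [sub_self, Real.sinh_zero, mul_zero, sub_zero]
  rw [show (0:ℝ) - ω * (T - t₀) = -(ω * (T - t₀)) by ring, Real.sinh_neg,
    Real.sinh_two_mul, ← hsdef]
  field_simp
  ring
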